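/- arXiv:2505.09464 — 5 statements merged into one kernel-verified Lean document; each statement's English description precedes it below -/
import Mathlib

section
/- If μ is a probability measure on F_q^d with support E, then sup over nonzero ξ of |μ̂(ξ)| is at least sqrt((q^d |E|^{-1} − 1)/(q^d − 1)). -/
open Finset BigOperators Matrix

noncomputable def ft {F : Type*} [CommRing F] [Fintype F] {d : ℕ}
    (χ : AddChar F ℂ) (f : (Fin d → F) → ℂ) (ξ : Fin d → F) : ℂ :=
  ∑ x, χ (-(ξ ⬝ᵥ x)) * f x

section auxLemmas
variable {F : Type*} [Field F] [Fintype F] [DecidableEq F] {d : ℕ}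

omit [Fintype F] [DecidableEq F] in
lemma addchar_map_sum' (χ : AddChar F ℂ) {ι : Type*} (s : Finset ι) (f : ι → F) :
    χ (∑ i ∈ s, f i) = ∏ i ∈ s, χ (f i) := by
  classical
  induction s using Finset.cons_induction with
  | empty => simp
  | cons a s ha ih => rw [Finset.sum_cons, Finset.prod_cons, AddChar.map_add_eq_mul, ih]

omit [DecidableEq F] in
lemma myConjChar (χ : AddChar F ℂ) (a : F) : (starRingEnd ℂ) (χ a) = χ (-a) := by
  have h : 0 < ringChar F := Nat.pos_of_ne_zero (CharP.ringChar_ne_zero_of_finite F)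
  rw [AddChar.starComp_apply h, AddChar.inv_apply]

lemma orth' (χ : AddChar F ℂ) (hχ : χ ≠ 1) (v : Fin d → F) :
    ∑ ξ : Fin d → F, χ (ξ ⬝ᵥ v) = if v = 0 then ((Fintype.card F : ℂ)) ^ d else 0 := by
  have hprim : χ.IsPrimitive := AddChar.IsPrimitive.of_ne_one hχ
  have h1 : ∀ ξ : Fin d → F, χ (ξ ⬝ᵥ v) = ∏ i, χ (ξ i * v i) := fun ξ =>
    addchar_map_sum' χ _ _
  rw [Finset.sum_congr rfl fun ξ _ => h1 ξ]
  have h2 : (∏ i, ∑ t : F, χ (t * v i)) = ∑ ξ : Fin d → F, ∏ i, χ (ξ i * v i) := by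
    rw [Finset.prod_univ_sum]
    rw [Fintype.piFinset_univ]
  rw [← h2]
  by_cases hv : v = 0
  · subst hv
    simp [Finset.card_univ]
  · rw [if_neg hv]
    obtain ⟨i, hi⟩ : ∃ i, v i ≠ 0 := by
      by_contra h; push_neg at h; exact hv (funext h)
    refine Finset.prod_eq_zero (Finset.mem_univ i) ?_
    rw [AddChar.sum_mulShift (v i) hprim, if_neg hi]; norm_num

lemma plancherel' (χ : AddChar F ℂ) (hχ : χ ≠ 1) (μ : (Fin d → F) → ℝ) :
    ∑ ξ : Fin d → F, ‖ft χ (fun x => (μ x : ℂ)) ξ‖ ^ 2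
      = (Fintype.card F : ℝ) ^ d * ∑ x, μ x ^ 2 := by
  set f : (Fin d → F) → ℂ := fun x => (μ x : ℂ) with hf
  have key : ∀ z : ℂ, ((‖z‖ ^ 2 : ℝ) : ℂ) = z * (starRingEnd ℂ) z := fun z => by
    rw [Complex.mul_conj]; norm_cast; rw [Complex.normSq_eq_norm_sq]
  have hC : ∑ ξ : Fin d → F, ft χ f ξ * (starRingEnd ℂ) (ft χ f ξ)
      = (Fintype.card F : ℂ) ^ d * ∑ x, (μ x : ℂ) ^ 2 := by
    calc ∑ ξ : Fin d → F, ft χ f ξ * (starRingEnd ℂ) (ft χ f ξ)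
        = ∑ ξ : Fin d → F, ∑ x : Fin d → F, ∑ y : Fin d → F,
            ((μ x : ℂ) * (μ y : ℂ)) * χ (ξ ⬝ᵥ (y - x)) := by
          refine Finset.sum_congr rfl fun ξ _ => ?_
          rw [show ft χ f ξ = ∑ x, χ (-(ξ ⬝ᵥ x)) * f x from rfl, map_sum,
            Finset.sum_mul_sum]
          refine Finset.sum_congr rfl fun x _ => Finset.sum_congr rfl fun y _ => ?_
          simp only [_root_.map_mul, myConjChar, neg_neg, hf, Complex.conj_ofReal]
          rw [show ξ ⬝ᵥ (y - x) = ξ ⬝ᵥ y + -(ξ ⬝ᵥ x) by rw [dotProduct_sub, sub_eq_add_neg],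
            AddChar.map_add_eq_mul]
          ring
      _ = ∑ x : Fin d → F, ∑ y : Fin d → F,
            ((μ x : ℂ) * (μ y : ℂ)) * ∑ ξ : Fin d → F, χ (ξ ⬝ᵥ (y - x)) := by
          rw [Finset.sum_comm]
          refine Finset.sum_congr rfl fun x _ => ?_
          rw [Finset.sum_comm]
          exact Finset.sum_congr rfl fun y _ => by rw [Finset.mul_sum]
      _ = ∑ x : Fin d → F, ((μ x : ℂ) * (μ x : ℂ)) * (Fintype.card F : ℂ) ^ d := by
          refine Finset.sum_congr rfl fun x _ => ?_
          have : ∀ y : Fin d → F, ((μ x : ℂ) * (μ y : ℂ)) * ∑ ξ : Fin d → F, χ (ξ ⬝ᵥ (y - x))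
              = if y = x then ((μ x : ℂ) * (μ y : ℂ)) * (Fintype.card F : ℂ) ^ d else 0 := by
            intro y
            rw [orth' χ hχ]
            simp only [sub_eq_zero]
            split_ifs <;> simp
          rw [Finset.sum_congr rfl fun y _ => this y, Finset.sum_ite_eq' univ x _,
            if_pos (mem_univ x)]
      _ = (Fintype.card F : ℂ) ^ d * ∑ x, (μ x : ℂ) ^ 2 := by
          rw [Finset.mul_sum]
          exact Finset.sum_congr rfl fun x _ => by ring
  have := hC
  rw [← Finset.sum_congr rfl fun ξ _ => key (ft χ f ξ)] at this
  exact_mod_cast this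

end auxLemmas

/-- If `μ` is a probability measure on `F_q^d` with support `E`, then
`sup_{ξ ≠ 0} |μ̂(ξ)| ≥ sqrt((q^d |E|⁻¹ − 1)/(q^d − 1))`. -/
theorem stmt_4 {F : Type*} [Field F] [Fintype F] [DecidableEq F] {d q : ℕ}
    (hq : Fintype.card F = q) (hq2 : 2 ≤ q) (χ : AddChar F ℂ) (hχ : χ ≠ 1)
    (μ : (Fin d → F) → ℝ) (hμ0 : ∀ x, 0 ≤ μ x) (hμ1 : ∑ x, μ x = 1)
    (E : Finset (Fin d → F)) (hE : ∀ x, x ∈ E ↔ 0 < μ x) :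
    Real.sqrt (((q : ℝ) ^ d * (E.card : ℝ)⁻¹ - 1) / ((q : ℝ) ^ d - 1)) ≤
      ⨆ ξ : {ξ : Fin d → F // ξ ≠ 0}, ‖ft χ (fun x => (μ x : ℂ)) ξ.1‖ := by
  classical
  set f : (Fin d → F) → ℂ := fun x => (μ x : ℂ) with hf
  set M := ⨆ ξ : {ξ : Fin d → F // ξ ≠ 0}, ‖ft χ f ξ.1‖ with hM
  by_cases hd : d = 0
  · subst hd
    have he : IsEmpty {ξ : Fin 0 → F // ξ ≠ 0} := by
      constructor; rintro ⟨ξ, hξ⟩; exact hξ (funext fun i => i.elim0)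
    rw [hM, Real.iSup_of_isEmpty]
    rw [pow_zero, sub_self, div_zero, Real.sqrt_zero]
  -- main case : d ≠ 0
  have hqR : (2:ℝ) ≤ (q:ℝ) := by exact_mod_cast hq2
  have hNq : (q:ℝ) ≤ (q:ℝ)^d := le_self_pow₀ (by linarith) hd
  have hN1 : (1:ℝ) < (q:ℝ)^d := by linarith
  have hcard : Fintype.card (Fin d → F) = q ^ d := by
    rw [Fintype.card_fun, hq, Fintype.card_fin]
  have hft0 : ft χ f 0 = 1 := by
    have : ft χ f 0 = ∑ x, (μ x : ℂ) := by
      refine Finset.sum_congr rfl fun x _ => ?_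
      rw [zero_dotProduct, neg_zero, AddChar.map_zero_eq_one, one_mul]
    rw [this, ← Complex.ofReal_sum, hμ1, Complex.ofReal_one]
  have hplan := plancherel' χ hχ μ
  rw [hq] at hplan
  push_cast at hplan
  -- support facts
  have hE0 : ∀ x ∉ E, μ x = 0 := fun x hx =>
    le_antisymm (not_lt.mp fun h => hx ((hE x).2 h)) (hμ0 x)
  have hsumE : ∑ x ∈ E, μ x = 1 := by
    rw [← hμ1]
    exact Finset.sum_subset (Finset.subset_univ E) (fun x _ hx => hE0 x hx)
  have hne : E.Nonempty := by
    rcases E.eq_empty_or_nonempty with h | h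
    · rw [h] at hsumE; simp at hsumE
    · exact h
  have hEpos : (0:ℝ) < (E.card : ℝ) := by exact_mod_cast Finset.card_pos.mpr hne
  have hCS : 1 ≤ (E.card : ℝ) * ∑ x, μ x ^ 2 := by
    have h1 : ((∑ x ∈ E, μ x)) ^ 2 ≤ (E.card : ℝ) * ∑ x ∈ E, μ x ^ 2 :=
      sq_sum_le_card_mul_sum_sq
    have h2 : ∑ x ∈ E, μ x ^ 2 ≤ ∑ x, μ x ^ 2 :=
      Finset.sum_le_sum_of_subset_of_nonneg (Finset.subset_univ E)
        (fun x _ _ => sq_nonneg _)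
    have h3 := mul_le_mul_of_nonneg_left h2 hEpos.le
    rw [hsumE] at h1
    calc (1:ℝ) = 1 ^ 2 := by ring
      _ ≤ (E.card : ℝ) * ∑ x ∈ E, μ x ^ 2 := h1
      _ ≤ _ := h3
  -- supremum facts
  have hnty : Nonempty {ξ : Fin d → F // ξ ≠ 0} := by
    refine ⟨⟨fun _ => 1, fun h => ?_⟩⟩
    have := congrFun h ⟨0, Nat.pos_of_ne_zero hd⟩
    simp at this
  have hbdd : BddAbove (Set.range fun ξ : {ξ : Fin d → F // ξ ≠ 0} => ‖ft χ f ξ.1‖) :=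
    Set.Finite.bddAbove (Set.finite_range _)
  have hub : ∀ ξ : Fin d → F, ξ ≠ 0 → ‖ft χ f ξ‖ ≤ M := fun ξ hξ =>
    le_ciSup hbdd (⟨ξ, hξ⟩ : {ξ : Fin d → F // ξ ≠ 0})
  have hM0 : 0 ≤ M :=
    (norm_nonneg (ft χ f hnty.some.1)).trans (hub _ hnty.some.2)
  -- sum split and bound
  have hsplit : ∑ ξ : Fin d → F, ‖ft χ f ξ‖ ^ 2
      = ‖ft χ f 0‖ ^ 2 + ∑ ξ ∈ univ.erase 0, ‖ft χ f ξ‖ ^ 2 :=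
    (Finset.add_sum_erase univ _ (mem_univ 0)).symm
  have hq1 : 1 ≤ q ^ d := Nat.one_le_pow d q (by omega)
  have hbound : ∑ ξ ∈ univ.erase 0, ‖ft χ f ξ‖ ^ 2 ≤ ((q:ℝ)^d - 1) * M ^ 2 := by
    have hle : ∀ ξ ∈ univ.erase 0, ‖ft χ f ξ‖ ^ 2 ≤ M ^ 2 := fun ξ hξ =>
      pow_le_pow_left₀ (norm_nonneg _) (hub ξ (Finset.ne_of_mem_erase hξ)) 2
    calc ∑ ξ ∈ univ.erase 0, ‖ft χ f ξ‖ ^ 2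
        ≤ (univ.erase (0 : Fin d → F)).card • M ^ 2 := Finset.sum_le_card_nsmul _ _ _ hle
      _ = ((univ.erase (0 : Fin d → F)).card : ℝ) * M ^ 2 := by rw [nsmul_eq_mul]
      _ = ((q:ℝ)^d - 1) * M ^ 2 := by
          rw [Finset.card_erase_of_mem (mem_univ 0), Finset.card_univ, hcard,
            Nat.cast_sub hq1]
          push_cast
          ring
  have hft0n : ‖ft χ f 0‖ ^ 2 = 1 := by rw [hft0]; simp
  have hinv : ((E.card : ℝ))⁻¹ ≤ ∑ x, μ x ^ 2 := by
    rw [inv_eq_one_div, div_le_iff₀ hEpos]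
    linarith [hCS, mul_comm (E.card : ℝ) (∑ x, μ x ^ 2)]
  have hNN : (0:ℝ) ≤ (q:ℝ)^d := by positivity
  have h3 : (q:ℝ)^d * (E.card : ℝ)⁻¹ ≤ (q:ℝ)^d * ∑ x, μ x ^ 2 :=
    mul_le_mul_of_nonneg_left hinv hNN
  have hT : (q:ℝ)^d * (E.card : ℝ)⁻¹ - 1 ≤ ((q:ℝ)^d - 1) * M ^ 2 := by
    linarith [hplan, hsplit, hbound, hft0n, h3]
  have hdiv : ((q:ℝ)^d * (E.card : ℝ)⁻¹ - 1) / ((q:ℝ)^d - 1) ≤ M ^ 2 := by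
    rw [div_le_iff₀ (by linarith : (0:ℝ) < (q:ℝ)^d - 1)]
    linarith [hT, mul_comm ((q:ℝ)^d - 1) (M ^ 2)]
  calc Real.sqrt (((q : ℝ) ^ d * (E.card : ℝ)⁻¹ - 1) / ((q : ℝ) ^ d - 1))
      ≤ Real.sqrt (M ^ 2) := Real.sqrt_le_sqrt hdiv
    _ = M := Real.sqrt_sq hM0
end

section
/- Let d > k ≥ 1 and let K ⊆ F_q^d be a (d,k)-set, i.e., for every k-dimensional subspace V of F_q^d there exists u ∈ F_q^d with u + V ⊆ K. Then there exists a probability measure μ supported on K with |μ̂(ξ)| ≤ q^{-k} for all nonzero ξ. -/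
open Finset BigOperators Matrix

lemma charSum {F : Type*} [Field F] [Fintype F] [DecidableEq F] {k : ℕ}
    (χ : AddChar F ℂ) (hχ : χ ≠ 1) (v : Fin k → F) :
    ∑ t : Fin k → F, χ (-(∑ i, v i * t i)) = if v = 0 then ((Fintype.card F : ℂ))^k else 0 := by
  classical
  have hprim := AddChar.IsPrimitive.of_ne_one hχ
  have h1 : ∀ t : Fin k → F, χ (-(∑ i, v i * t i)) = ∏ i, χ (t i * (-v i)) := by
    intro t
    rw [← Finset.sum_neg_distrib]
    rw [show (∑ i, -(v i * t i)) = ∑ i, t i * (-v i) by congr 1; funext i; ring]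
    induction (univ : Finset (Fin k)) using Finset.induction with
    | empty => simp
    | insert _ _ h ih => rw [Finset.sum_insert h, Finset.prod_insert h, AddChar.map_add_eq_mul, ih]
  simp_rw [h1]
  rw [← Fintype.piFinset_univ, ← Finset.prod_univ_sum (fun _ => univ) (fun i s => χ (s * (-v i)))]
  have h2 : ∀ i, ∑ s : F, χ (s * (-v i)) = if v i = 0 then (Fintype.card F : ℂ) else 0 := by
    intro i
    rw [AddChar.sum_mulShift _ hprim]
    simp
  simp_rw [h2]
  by_cases hv : v = 0
  · simp [hv, Finset.card_univ]
  · obtain ⟨i, hi⟩ := Function.ne_iff.mp hv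
    rw [if_neg hv]
    exact Finset.prod_eq_zero (Finset.mem_univ i) (by simp at hi; simp [hi])

/-- A `(d,k)`-set `K ⊆ F_q^d` supports a probability measure `μ` with `|μ̂(ξ)| ≤ q^{-k}` for
all nonzero `ξ`. -/
theorem stmt_12 {F : Type*} [Field F] [Fintype F] {d k q : ℕ}
    (hq : Fintype.card F = q) (χ : AddChar F ℂ) (hχ : χ ≠ 1)
    (hk : 1 ≤ k) (hdk : k < d)
    (K : Set (Fin d → F))
    (hK : ∀ V : Submodule F (Fin d → F), Module.finrank F V = k →
      ∃ u : Fin d → F, ∀ v ∈ V, u + v ∈ K) :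
    ∃ μ : (Fin d → F) → ℝ, (∀ x, 0 ≤ μ x) ∧ (∑ x, μ x = 1) ∧
      (∀ x, μ x ≠ 0 → x ∈ K) ∧
      ∀ ξ : Fin d → F, ξ ≠ 0 →
        ‖ft χ (fun x => (μ x : ℂ)) ξ‖ ≤ ((q : ℝ) ^ k)⁻¹ := by
  classical
  subst hq
  set q := Fintype.card F with hq
  have hq1 : 1 < q := Fintype.one_lt_card
  have hQ0 : (0:ℝ) < (q:ℝ) := by exact_mod_cast Nat.lt_of_lt_of_le Nat.zero_lt_one hq1.le
  set m := d - k with hm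
  have hm1 : 1 ≤ m := by omega
  have hkm : k + m = d := by omega
  set e : Fin k ⊕ Fin m ≃ Fin d := (finSumFinEquiv.trans (finCongr hkm)) with he
  set Lf : (Fin m → Fin k → F) → (Fin k → F) → (Fin d → F) :=
    fun A t i => Sum.elim t (fun j => ∑ i', A j i' * t i') (e.symm i) with hLf
  have hLl : ∀ A t i, Lf A t (e (Sum.inl i)) = t i := by intro A t i; simp [hLf]
  have hLr : ∀ A t j, Lf A t (e (Sum.inr j)) = ∑ i', A j i' * t i' := by
    intro A t j; simp [hLf]
  have hLlin : ∀ A, ∃ L : (Fin k → F) →ₗ[F] (Fin d → F), ⇑L = Lf A := by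
    intro A
    refine ⟨{ toFun := Lf A, map_add' := ?_, map_smul' := ?_ }, rfl⟩
    · intro t s; funext i
      simp only [hLf]
      cases h : e.symm i with
      | inl j => simp [h]
      | inr j => simp [h, mul_add, Finset.sum_add_distrib]
    · intro c t; funext i
      simp only [hLf]
      cases h : e.symm i with
      | inl j => simp [h]
      | inr j => simp [h, Finset.mul_sum, smul_eq_mul, mul_left_comm]
  choose L hL using hLlin
  have hLinj : ∀ A, Function.Injective (L A) := by
    intro A t s h
    funext i
    have := congrFun h (e (Sum.inl i))
    rw [hL] at this
    simpa [hLl] using this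
  have hrk : ∀ A, Module.finrank F (LinearMap.range (L A)) = k := by
    intro A
    rw [LinearMap.finrank_range_of_inj (hLinj A), Module.finrank_fin_fun]
  choose u hu using fun A => hK _ (hrk A)
  set c : ℝ := ((Fintype.card F : ℝ) ^ (k*m) * (Fintype.card F:ℝ)^k)⁻¹ with hc
  have hc0 : 0 < c := by positivity
  refine ⟨fun x => c * ∑ A, ∑ t, if x = u A + Lf A t then 1 else 0, ?_, ?_, ?_, ?_⟩
  · intro x
    refine mul_nonneg hc0.le (Finset.sum_nonneg fun A _ => Finset.sum_nonneg fun t _ => ?_)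
    split_ifs <;> norm_num
  · rw [← Finset.mul_sum, Finset.sum_comm]
    have hA : ∀ A : Fin m → Fin k → F,
        (∑ x : Fin d → F, ∑ t : Fin k → F, if x = u A + Lf A t then (1:ℝ) else 0)
          = (Fintype.card F:ℝ)^k := by
      intro A
      rw [Finset.sum_comm]
      have h1 : ∀ t : Fin k → F,
          (∑ x : Fin d → F, if x = u A + Lf A t then (1:ℝ) else 0) = 1 := by
        intro t; simp
      simp_rw [h1]
      simp [Finset.card_univ, Fintype.card_fun]
    simp_rw [hA]
    rw [Finset.sum_const, Finset.card_univ, nsmul_eq_mul]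
    have hcard : (Fintype.card (Fin m → Fin k → F) : ℝ) = (Fintype.card F:ℝ)^(k*m) := by
      rw [Fintype.card_fun, Fintype.card_fun]
      push_cast
      rw [← pow_mul, Fintype.card_fin, Fintype.card_fin]
    rw [hcard, hc]
    field_simp
  · intro x hx
    have hx' : (∑ A, ∑ t, if x = u A + Lf A t then (1:ℝ) else 0) ≠ 0 := by
      intro h
      apply hx
      show c * _ = 0
      rw [h, mul_zero]
    obtain ⟨A, -, hA⟩ := Finset.exists_ne_zero_of_sum_ne_zero hx'
    obtain ⟨t, -, ht⟩ := Finset.exists_ne_zero_of_sum_ne_zero hA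
    have : x = u A + Lf A t := by by_contra hne; simp [hne] at ht
    rw [this, ← hL]
    exact hu A _ ⟨t, rfl⟩
  · intro ξ hξ
    set w : (Fin m → Fin k → F) → Fin k → F :=
      fun A i => ξ (e (Sum.inl i)) + ∑ j, A j i * ξ (e (Sum.inr j)) with hw
    have hdot : ∀ A t, ξ ⬝ᵥ (Lf A t) = ∑ i, w A i * t i := by
      intro A t
      rw [dotProduct, ← Equiv.sum_comp e (fun i => ξ i * Lf A t i), Fintype.sum_sum_type]
      simp only [hLl, hLr]
      simp only [hw, add_mul, Finset.sum_add_distrib, Finset.sum_mul]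
      congr 1
      rw [Finset.sum_comm]
      refine Finset.sum_congr rfl fun j _ => ?_
      rw [Finset.mul_sum]
      exact Finset.sum_congr rfl fun i _ => by ring
    have hμc : ∀ x : Fin d → F,
        ((c * ∑ A, ∑ t, if x = u A + Lf A t then (1:ℝ) else 0 : ℝ) : ℂ)
          = (c:ℂ) * ∑ A, ∑ t, if x = u A + Lf A t then (1:ℂ) else 0 := by
      intro x
      push_cast [apply_ite (Complex.ofReal)]
      norm_num
    have key : ft χ (fun x => ((c * ∑ A, ∑ t, if x = u A + Lf A t then (1:ℝ) else 0 : ℝ) : ℂ)) ξ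
        = (c:ℂ) * ∑ A, χ (-(ξ ⬝ᵥ u A)) * (if w A = 0 then ((Fintype.card F):ℂ)^k else 0) := by
      calc ft χ (fun x => ((c * ∑ A, ∑ t, if x = u A + Lf A t then (1:ℝ) else 0 : ℝ) : ℂ)) ξ
          = ∑ x, (c:ℂ) * (χ (-(ξ ⬝ᵥ x)) * ∑ A, ∑ t, if x = u A + Lf A t then (1:ℂ) else 0) := by
            simp only [ft]
            refine Finset.sum_congr rfl fun x _ => ?_
            rw [hμc x]; ring
        _ = (c:ℂ) * ∑ x, ∑ A, ∑ t, (if x = u A + Lf A t then χ (-(ξ ⬝ᵥ x)) else 0) := by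
            rw [Finset.mul_sum]
            refine Finset.sum_congr rfl fun x _ => ?_
            congr 1
            rw [Finset.mul_sum]
            refine Finset.sum_congr rfl fun A _ => ?_
            rw [Finset.mul_sum]
            exact Finset.sum_congr rfl fun t _ => by rw [mul_ite, mul_one, mul_zero]
        _ = (c:ℂ) * ∑ A, ∑ t, χ (-(ξ ⬝ᵥ (u A + Lf A t))) := by
            rw [Finset.sum_comm]
            congr 1
            refine Finset.sum_congr rfl fun A _ => ?_
            rw [Finset.sum_comm]
            refine Finset.sum_congr rfl fun t _ => ?_
            simp
        _ = (c:ℂ) * ∑ A, χ (-(ξ ⬝ᵥ u A)) * (if w A = 0 then ((Fintype.card F):ℂ)^k else 0) := by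
            congr 1
            refine Finset.sum_congr rfl fun A _ => ?_
            rw [← charSum χ hχ (w A), Finset.mul_sum]
            refine Finset.sum_congr rfl fun t _ => ?_
            rw [dotProduct_add, neg_add, AddChar.map_add_eq_mul, hdot A t]
    have hnorm : ‖ft χ (fun x => ((c * ∑ A, ∑ t, if x = u A + Lf A t then (1:ℝ) else 0 : ℝ) : ℂ)) ξ‖
        ≤ c * ∑ A, (if w A = 0 then (Fintype.card F:ℝ)^k else 0) := by
      rw [key, norm_mul]
      have hcn : ‖((c:ℝ):ℂ)‖ = c := by
        simp [abs_of_nonneg hc0.le]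
      rw [hcn]
      refine mul_le_mul_of_nonneg_left ?_ hc0.le
      refine (norm_sum_le _ _).trans_eq ?_
      refine Finset.sum_congr rfl fun A _ => ?_
      rw [norm_mul, AddChar.norm_apply, one_mul]
      split_ifs with h
      · simp
      · simp
    set N := (Finset.univ.filter (fun A : Fin m → Fin k → F => w A = 0)).card with hN
    have hsum : (∑ A, (if w A = 0 then (Fintype.card F:ℝ)^k else 0))
        = (N:ℝ) * (Fintype.card F:ℝ)^k := by
      rw [← Finset.sum_filter, Finset.sum_const, nsmul_eq_mul]
    have hNbound : N ≤ Fintype.card F ^ (k*(m-1)) := by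
      by_cases h2 : (fun j => ξ (e (Sum.inr j))) = (0 : Fin m → F)
      · have hemp : (Finset.univ.filter (fun A : Fin m → Fin k → F => w A = 0)) = ∅ := by
          rw [Finset.filter_eq_empty_iff]
          intro A _
          intro hwA
          obtain ⟨i0, hi0⟩ := Function.ne_iff.mp hξ
          have hi0e : e (e.symm i0) = i0 := Equiv.apply_symm_apply e i0
          cases hs : e.symm i0 with
          | inl i =>
            have h1 := congrFun hwA i
            simp only [hw, Pi.zero_apply] at h1
            have h3 : ∀ j, ξ (e (Sum.inr j)) = 0 := fun j => congrFun h2 j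
            rw [hs] at hi0e
            apply hi0
            rw [← hi0e]
            have : (∑ j, A j i * ξ (e (Sum.inr j))) = 0 := by
              refine Finset.sum_eq_zero fun j _ => by rw [h3 j, mul_zero]
            rw [this, add_zero] at h1
            exact h1
          | inr j =>
            rw [hs] at hi0e
            exact hi0 (by rw [← hi0e]; exact congrFun h2 j)
        rw [hN, hemp]
        simp
      · obtain ⟨j0, hj0⟩ := Function.ne_iff.mp h2
        simp only [Pi.zero_apply] at hj0
        have hinj : Set.InjOn (fun (A : Fin m → Fin k → F) (j : {j : Fin m // j ≠ j0}) => A j.1)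
            ((Finset.univ.filter (fun A : Fin m → Fin k → F => w A = 0)) : Finset _) := by
          intro A hA B hB hfAB
          simp only [Finset.coe_filter, Set.mem_setOf_eq, Finset.mem_univ, true_and] at hA hB
          funext j i
          by_cases hj : j = j0
          · subst hj
            have hA' := congrFun hA i
            have hB' := congrFun hB i
            simp only [hw, Pi.zero_apply] at hA' hB'
            have hsub : ∑ j', (A j' i - B j' i) * ξ (e (Sum.inr j')) = 0 := by
              simp only [sub_mul, Finset.sum_sub_distrib]
              have : (∑ j', A j' i * ξ (e (Sum.inr j'))) = ∑ j', B j' i * ξ (e (Sum.inr j')) := by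
                linear_combination hA' - hB'
              rw [this, sub_self]
            rw [Finset.sum_eq_single j] at hsub
            · rcases mul_eq_zero.mp hsub with h | h
              · exact sub_eq_zero.mp h
              · exact absurd h hj0
            · intro b _ hb
              have : A b i = B b i := congrFun (congrFun hfAB ⟨b, hb⟩) i
              rw [this, sub_self, zero_mul]
            · intro hmem; exact absurd (Finset.mem_univ j) hmem
          · exact congrFun (congrFun hfAB ⟨j, hj⟩) i
        have hle := Finset.card_le_card_of_injOn _ (fun A _ => Finset.mem_univ _) hinj
        refine le_trans hle ?_
        rw [Finset.card_univ, Fintype.card_fun, Fintype.card_fun, Fintype.card_fin, ← pow_mul]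
        have hcs : Fintype.card {j : Fin m // j ≠ j0} = m - 1 := by
          simp [Fintype.card_subtype_compl]
        rw [hcs]
    have harith : k * m = k*(m-1) + k := by
      conv_lhs => rw [← Nat.succ_pred_eq_of_pos (by omega : 0 < m)]
      rw [Nat.mul_succ, Nat.pred_eq_sub_one]
    calc ‖ft χ (fun x => ((c * ∑ A, ∑ t, if x = u A + Lf A t then (1:ℝ) else 0 : ℝ) : ℂ)) ξ‖
        ≤ c * ((N:ℝ) * (Fintype.card F:ℝ)^k) := by rw [← hsum]; exact hnorm
      _ ≤ c * ((Fintype.card F:ℝ)^(k*(m-1)) * (Fintype.card F:ℝ)^k) := by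
          refine mul_le_mul_of_nonneg_left (mul_le_mul_of_nonneg_right ?_ (by positivity)) hc0.le
          exact_mod_cast Nat.cast_le.mpr hNbound
      _ = ((Fintype.card F:ℝ)^k)⁻¹ := by
          rw [hc, harith, pow_add]
          field_simp
end

section
/- Let d ≥ 2 and K ⊆ F_q^d be a Kakeya set (for every direction x ∈ F_q^d \ {0} there is y with the line {y + a·x : a ∈ F_q} contained in K). Then there exists a probability measure μ supported on K with |μ̂(ξ)| ≤ q^{-1} for all nonzero ξ ∈ F_q^d. -/
open Finset BigOperators Matrix
open scoped Classical

lemma aux_ker_card {F : Type*} [Field F] [Fintype F] {d q : ℕ}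
    (hq : Fintype.card F = q) (ξ : Fin d → F) (hξ : ξ ≠ 0) :
    (Finset.univ.filter (fun x : Fin d → F => ξ ⬝ᵥ x = 0)).card ≤ q ^ (d - 1) := by
  classical
  obtain ⟨i, hi⟩ := Function.ne_iff.mp hξ
  simp only [Pi.zero_apply] at hi
  have := Finset.card_le_card_of_injOn (f := fun (x : Fin d → F) (j : {j : Fin d // j ≠ i}) => x j.1)
    (s := Finset.univ.filter (fun x : Fin d → F => ξ ⬝ᵥ x = 0)) (t := Finset.univ)
    (fun _ _ => Finset.mem_univ _) ?_
  · calc _ ≤ _ := this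
    _ = q ^ (d - 1) := by
        rw [Finset.card_univ, Fintype.card_fun, hq]
        congr 1
        rw [Fintype.card_subtype_compl]
        simp [Fintype.card_subtype_eq]
  · intro x hx x' hx' h
    simp only [Finset.mem_coe, Finset.mem_filter] at hx hx'
    funext j
    by_cases hj : j = i
    · subst hj
      have hsum : ∀ z : Fin d → F, ξ ⬝ᵥ z = ξ j * z j + ∑ k ∈ Finset.univ.erase j, ξ k * z k := by
        intro z
        rw [dotProduct, ← Finset.add_sum_erase _ _ (Finset.mem_univ j)]
      have heq : ∀ k ∈ Finset.univ.erase j, ξ k * x k = ξ k * x' k := by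
        intro k hk
        have : x k = x' k := congrFun h ⟨k, Finset.ne_of_mem_erase hk⟩
        rw [this]
      have h1 := hx.2; have h2 := hx'.2
      rw [hsum] at h1 h2
      rw [Finset.sum_congr rfl heq] at h1
      have : ξ j * x j = ξ j * x' j := by linear_combination h1 - h2
      exact mul_left_cancel₀ hi this
    · exact congrFun h ⟨j, hj⟩

lemma aux_char_sum {F : Type*} [Field F] [Fintype F] {q : ℕ} (hq : Fintype.card F = q)
    (χ : AddChar F ℂ) (hχ : χ ≠ 1) (t : F) :
    (∑ a : F, χ (-(a * t))) = if t = 0 then (q : ℂ) else 0 := by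
  split_ifs with ht
  · subst ht; simp [hq]
  · have h0 : χ ≠ 0 := by rwa [← AddChar.one_eq_zero]
    have : (∑ a : F, χ (-(a * t))) = ∑ b : F, χ b := by
      apply Fintype.sum_bijective (fun a : F => a * (-t))
        (Equiv.mulRight₀ (-t) (neg_ne_zero.mpr ht)).bijective
      intro a; congr 1; ring
    rw [this]
    exact AddChar.sum_eq_zero_iff_ne_zero.mpr h0

/-- A Kakeya set `K ⊆ F_q^d`, `d ≥ 2`, supports a probability measure `μ` with
`|μ̂(ξ)| ≤ q^{-1}` for all nonzero `ξ`. -/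
theorem stmt_13 {F : Type*} [Field F] [Fintype F] {d q : ℕ}
    (hq : Fintype.card F = q) (χ : AddChar F ℂ) (hχ : χ ≠ 1) (hd : 2 ≤ d)
    (K : Set (Fin d → F))
    (hK : ∀ x : Fin d → F, x ≠ 0 → ∃ y : Fin d → F, ∀ a : F, y + a • x ∈ K) :
    ∃ μ : (Fin d → F) → ℝ, (∀ x, 0 ≤ μ x) ∧ (∑ x, μ x = 1) ∧
      (∀ x, μ x ≠ 0 → x ∈ K) ∧
      ∀ ξ : Fin d → F, ξ ≠ 0 →
        ‖ft χ (fun x => (μ x : ℂ)) ξ‖ ≤ (q : ℝ)⁻¹ := by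
  classical
  have hq2 : 2 ≤ q := hq ▸ Fintype.one_lt_card
  have hq0R : (0:ℝ) < q := by exact_mod_cast (by omega : 0 < q)
  set S : Finset (Fin d → F) := Finset.univ.filter (fun x => x ≠ 0) with hS
  have hScard : S.card = q ^ d - 1 := by
    rw [hS, Finset.filter_ne', Finset.card_erase_of_mem (Finset.mem_univ _),
      Finset.card_univ, Fintype.card_fun, Fintype.card_fin, hq]
  have hpow1 : 1 ≤ q ^ d := Nat.one_le_pow _ _ (by omega)
  have hpow1' : 1 ≤ q ^ (d - 1) := Nat.one_le_pow _ _ (by omega)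
  have hpow2 : 2 ≤ q ^ d := by
    calc 2 = 2 ^ 1 := rfl
    _ ≤ q ^ d := Nat.pow_le_pow_left (by omega) 1 |>.trans (Nat.pow_le_pow_right (by omega) (by omega))
  set D : ℝ := ((q ^ d - 1 : ℕ) : ℝ) * q with hD
  have hDpos : 0 < D := by
    apply mul_pos _ hq0R
    exact_mod_cast (by omega : 0 < q ^ d - 1)
  set Y : (Fin d → F) → (Fin d → F) := fun x => if h : x = 0 then 0 else (hK x h).choose with hY
  have hYK : ∀ x : Fin d → F, x ≠ 0 → ∀ a : F, Y x + a • x ∈ K := by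
    intro x hx a
    rw [hY]; simp only [dif_neg hx]
    exact (hK x hx).choose_spec a
  set ν : (Fin d → F) → ℝ :=
    fun z => ∑ x ∈ S, ∑ a : F, if Y x + a • x = z then (1:ℝ) else 0 with hν
  refine ⟨fun z => ν z / D, ?_, ?_, ?_, ?_⟩
  · intro z
    apply div_nonneg _ hDpos.le
    apply Finset.sum_nonneg; intro x _
    apply Finset.sum_nonneg; intro a _
    split <;> norm_num
  · rw [← Finset.sum_div]
    have : ∑ z, ν z = D := by
      rw [hν]
      rw [Finset.sum_comm]
      have : ∀ x ∈ S, (∑ z : Fin d → F, ∑ a : F, if Y x + a • x = z then (1:ℝ) else 0)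
          = (q : ℝ) := by
        intro x _
        rw [Finset.sum_comm]
        simp [hq]
      rw [Finset.sum_congr rfl this, Finset.sum_const, hScard, hD, nsmul_eq_mul]
    rw [this, div_self hDpos.ne']
  · intro z hz
    by_contra hzK
    apply hz
    rw [div_eq_zero_iff]; left
    rw [hν]
    apply Finset.sum_eq_zero; intro x hx
    apply Finset.sum_eq_zero; intro a _
    rw [if_neg]
    intro h
    exact hzK (h ▸ hYK x (by simpa [hS] using hx) a)
  · intro ξ hξ
    have hcast : ∀ z, ((ν z / D : ℝ) : ℂ)
        = (∑ x ∈ S, ∑ a : F, if Y x + a • x = z then (1:ℂ) else 0) / (D:ℂ) := by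
      intro z
      rw [hν]
      push_cast [apply_ite ((↑) : ℝ → ℂ)]
      norm_num
    have key : ft χ (fun z => ((ν z / D : ℝ) : ℂ)) ξ
        = (∑ x ∈ S, ∑ a : F, χ (-(ξ ⬝ᵥ (Y x + a • x)))) / (D : ℂ) := by
      unfold ft
      simp_rw [hcast, ← mul_div_assoc]
      rw [← Finset.sum_div]
      congr 1
      simp_rw [Finset.mul_sum]
      rw [Finset.sum_comm]
      refine Finset.sum_congr rfl fun x hx => ?_
      rw [Finset.sum_comm]
      refine Finset.sum_congr rfl fun a _ => ?_
      simp_rw [mul_ite, mul_one, mul_zero]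
      rw [Finset.sum_ite_eq]
      simp
    have hinner : ∀ x : Fin d → F, (∑ a : F, χ (-(ξ ⬝ᵥ (Y x + a • x))))
        = χ (-(ξ ⬝ᵥ Y x)) * (if ξ ⬝ᵥ x = 0 then (q:ℂ) else 0) := by
      intro x
      rw [← aux_char_sum hq χ hχ (ξ ⬝ᵥ x), Finset.mul_sum]
      refine Finset.sum_congr rfl fun a _ => ?_
      rw [dotProduct_add, dotProduct_smul, smul_eq_mul, neg_add,
        AddChar.map_add_eq_mul]
    have hb : ‖∑ x ∈ S, ∑ a : F, χ (-(ξ ⬝ᵥ (Y x + a • x)))‖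
        ≤ ((S.filter (fun x => ξ ⬝ᵥ x = 0)).card : ℝ) * q := by
      calc ‖∑ x ∈ S, ∑ a : F, χ (-(ξ ⬝ᵥ (Y x + a • x)))‖
          ≤ ∑ x ∈ S, ‖∑ a : F, χ (-(ξ ⬝ᵥ (Y x + a • x)))‖ := norm_sum_le _ _
        _ = ∑ x ∈ S, (if ξ ⬝ᵥ x = 0 then (q:ℝ) else 0) := by
            refine Finset.sum_congr rfl fun x _ => ?_
            rw [hinner, norm_mul, AddChar.norm_apply, one_mul]
            split_ifs <;> simp
        _ = ((S.filter (fun x => ξ ⬝ᵥ x = 0)).card : ℝ) * q := by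
            rw [Finset.sum_ite, Finset.sum_const, Finset.sum_const, nsmul_eq_mul]
            simp
    have hcount : (S.filter (fun x => ξ ⬝ᵥ x = 0)).card ≤ q ^ (d - 1) - 1 := by
      have hT := aux_ker_card hq ξ hξ
      have h0T : (0 : Fin d → F) ∈ Finset.univ.filter (fun x : Fin d → F => ξ ⬝ᵥ x = 0) := by
        simp
      have hfe : S.filter (fun x => ξ ⬝ᵥ x = 0)
          = (Finset.univ.filter (fun x : Fin d → F => ξ ⬝ᵥ x = 0)).erase 0 := by
        rw [hS]
        ext x
        simp [Finset.mem_erase, and_comm]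
      rw [hfe, Finset.card_erase_of_mem h0T]
      omega
    have harith : ((q ^ (d - 1) - 1 : ℕ) : ℝ) * q ≤ ((q ^ d - 1 : ℕ) : ℝ) := by
      have hpow : q ^ (d - 1) * q = q ^ d := by
        rw [← pow_succ]; congr 1; omega
      have h2 : (q ^ (d - 1) - 1) * q ≤ q ^ d - 1 := by
        calc (q ^ (d - 1) - 1) * q = q ^ (d - 1) * q - q := by rw [Nat.sub_mul, one_mul]
        _ = q ^ d - q := by rw [hpow]
        _ ≤ q ^ d - 1 := Nat.sub_le_sub_left (by omega) _
      exact_mod_cast h2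
    rw [key, norm_div]
    have hnD : ‖(D : ℂ)‖ = D := by
      rw [Complex.norm_real, Real.norm_of_nonneg hDpos.le]
    rw [hnD, div_le_iff₀ hDpos]
    have hid : (q:ℝ)⁻¹ * D = ((q ^ d - 1 : ℕ) : ℝ) := by
      rw [hD]; field_simp
    rw [hid]
    calc ‖∑ x ∈ S, ∑ a : F, χ (-(ξ ⬝ᵥ (Y x + a • x)))‖
        ≤ ((S.filter (fun x => ξ ⬝ᵥ x = 0)).card : ℝ) * q := hb
      _ ≤ ((q ^ (d - 1) - 1 : ℕ) : ℝ) * q := by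
          apply mul_le_mul_of_nonneg_right _ hq0R.le
          exact_mod_cast hcount
      _ ≤ ((q ^ d - 1 : ℕ) : ℝ) := harith
end

section
/- Every Kakeya set K ⊆ F_q^2 satisfies |K| ≥ q² / (2 − q^{-2}); in particular |K| ≥ q²/2. -/
open Finset BigOperators

private lemma aux_union {ι α : Type*} [DecidableEq ι] [DecidableEq α] (f : ι → Finset α)
    (h : ∀ i j, i ≠ j → (f i ∩ f j).card ≤ 1) (s : Finset ι) :
    ∑ i ∈ s, (f i).card ≤ (s.biUnion f).card + s.card.choose 2 := by
  induction s using Finset.induction_on with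
  | empty => simp
  | insert _ _ ha ih =>
    rename_i a t
    have hint : (f a ∩ t.biUnion f).card ≤ t.card := by
      have h1 : f a ∩ t.biUnion f = t.biUnion (fun i => f a ∩ f i) := by
        ext x; simp [Finset.mem_biUnion]; tauto
      rw [h1]
      calc (t.biUnion fun i => f a ∩ f i).card ≤ ∑ i ∈ t, (f a ∩ f i).card :=
            Finset.card_biUnion_le
        _ ≤ ∑ i ∈ t, 1 := Finset.sum_le_sum (fun i hi => h a i (by rintro rfl; exact ha hi))
        _ = t.card := by simp
    have hcard := Finset.card_union_add_card_inter (f a) (t.biUnion f)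
    rw [Finset.sum_insert ha, Finset.biUnion_insert, Finset.card_insert_of_notMem ha]
    have hch : (t.card + 1).choose 2 = t.card.choose 2 + t.card := by
      simp [Nat.choose_succ_succ, Nat.add_comm]
    omega

/-- Every Kakeya set `K ⊆ F_q^2` satisfies `|K| ≥ q²/(2 − q^{-2})`; in particular
`|K| ≥ q²/2`. -/
theorem stmt_14 {F : Type*} [Field F] [Fintype F] [DecidableEq F] {q : ℕ}
    (hq : Fintype.card F = q)
    (K : Finset (Fin 2 → F))
    (hK : ∀ x : Fin 2 → F, ∃ y : Fin 2 → F, ∀ a : F, y + a • x ∈ K) :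
    (q : ℝ) ^ 2 / (2 - ((q : ℝ) ^ 2)⁻¹) ≤ (K.card : ℝ) ∧
      (q : ℝ) ^ 2 / 2 ≤ (K.card : ℝ) := by
  choose y hy using hK
  have hq2 : 2 ≤ q := hq ▸ Fintype.one_lt_card
  set d : Option F → Fin 2 → F := fun i => Option.elim i ![0,1] (fun t => ![1,t]) with hd
  have hkey : ∀ i j : Option F, i ≠ j → ∀ u v : F, u • d i = v • d j → u = 0 := by
    rintro (_|t) (_|t') hij u v huv
    · exact absurd rfl hij
    · have h0 := congrFun huv 0
      have h1 := congrFun huv 1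
      simp [hd] at h0 h1
      subst h0
      simpa using h1
    · have h0 := congrFun huv 0
      simpa [hd] using h0
    · have ht : t ≠ t' := fun h => hij (by rw [h])
      have h0 := congrFun huv 0
      have h1 := congrFun huv 1
      simp [hd] at h0 h1
      subst h0
      by_contra hu
      exact ht (mul_left_cancel₀ hu h1)
  set f : Option F → Finset (Fin 2 → F) :=
    fun i => Finset.image (fun a : F => y (d i) + a • d i) (Finset.univ : Finset F) with hf
  have hsubK : ∀ i, f i ⊆ K := by
    intro i p hp
    simp [hf] at hp
    obtain ⟨a, rfl⟩ := hp
    exact hy (d i) a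
  have hone : ∀ i, ∃ k, d i k = 1 := by
    rintro (_|t)
    · exact ⟨1, by simp [hd]⟩
    · exact ⟨0, by simp [hd]⟩
  have hinj : ∀ i, Function.Injective (fun a : F => y (d i) + a • d i) := by
    intro i a b hab
    obtain ⟨k, hk⟩ := hone i
    have := congrFun hab k
    simpa [hk] using this
  have hcard : ∀ i, (f i).card = q := by
    intro i
    rw [hf]
    rw [Finset.card_image_of_injective _ (hinj i), Finset.card_univ, hq]
  have hpair : ∀ i j : Option F, i ≠ j → (f i ∩ f j).card ≤ 1 := by
    intro i j hij
    rw [Finset.card_le_one]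
    intro p hp p' hp'
    rw [Finset.mem_inter] at hp hp'
    obtain ⟨hpi, hpj⟩ := hp
    obtain ⟨hpi', hpj'⟩ := hp'
    simp only [hf, Finset.mem_image, Finset.mem_univ, true_and] at hpi hpj hpi' hpj'
    obtain ⟨a, ha⟩ := hpi
    obtain ⟨b, hb⟩ := hpj
    obtain ⟨a', ha'⟩ := hpi'
    obtain ⟨b', hb'⟩ := hpj'
    have hsub : (a - a') • d i = (b - b') • d j := by
      funext k
      have e1 := congrFun ha k
      have e2 := congrFun hb k
      have e3 := congrFun ha' k
      have e4 := congrFun hb' k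
      simp only [Pi.add_apply, Pi.smul_apply, smul_eq_mul] at e1 e2 e3 e4 ⊢
      have e5 : y (d i) k + a * d i k = y (d j) k + b * d j k := by rw [e1, e2]
      have e6 : y (d i) k + a' * d i k = y (d j) k + b' * d j k := by rw [e3, e4]
      linear_combination e5 - e6
    have haa : a = a' := sub_eq_zero.mp (hkey i j hij _ _ hsub)
    rw [← ha, ← ha', haa]
  have hmain := aux_union f hpair Finset.univ
  have hsum : ∑ i ∈ (Finset.univ : Finset (Option F)), (f i).card = q * (q + 1) := by
    rw [Finset.sum_congr rfl (fun i _ => hcard i)]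
    simp [Finset.card_univ, Fintype.card_option, hq]
    ring
  have hbU : (Finset.univ.biUnion f).card ≤ K.card :=
    Finset.card_le_card (Finset.biUnion_subset.mpr (fun i _ => hsubK i))
  have hchoose : 2 * ((q + 1).choose 2) = q * (q + 1) := by
    have h1 : (q + 1).choose 2 = q * (q + 1) / 2 := by
      rw [Nat.choose_two_right, Nat.add_sub_cancel, Nat.mul_comm]
    obtain ⟨r, hr⟩ := Nat.even_mul_succ_self q
    rw [h1]
    omega
  have hcu : (Finset.univ : Finset (Option F)).card = q + 1 := by
    simp [Finset.card_univ, Fintype.card_option, hq]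
  rw [hsum, hcu] at hmain
  have hN : q * (q + 1) ≤ 2 * K.card := by omega
  have hx : (q : ℝ) * ((q : ℝ) + 1) ≤ 2 * (K.card : ℝ) := by exact_mod_cast hN
  have hq2' : (2:ℝ) ≤ (q:ℝ) := by exact_mod_cast hq2
  have hqpos : (0:ℝ) < q := by linarith
  constructor
  · have hu0 : (0:ℝ) ≤ ((q:ℝ)^2)⁻¹ := by positivity
    have hinv : ((q:ℝ)^2)⁻¹ * (q:ℝ)^2 = 1 := inv_mul_cancel₀ (by positivity)
    have hpos : 0 < 2 - ((q:ℝ)^2)⁻¹ := by nlinarith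
    rw [div_le_iff₀ hpos]
    nlinarith [mul_nonneg (le_of_lt hpos) (by linarith : (0:ℝ) ≤ 2 * (K.card:ℝ) - (q:ℝ)*((q:ℝ)+1)), hinv, hu0, hq2']
  · rw [div_le_iff₀ (by norm_num : (0:ℝ) < 2)]
    nlinarith
end

section
/- Let d ≥ 2 and suppose there exists a Kakeya set K₀ ⊆ F_q^2 with |K₀| ≤ c·q² for some c ∈ (1/2, 1). Then K = K₀ × F_q^{d−2} is a Kakeya set in F_q^d, and every probability measure μ supported on K satisfies sup_{ξ ≠ 0} |μ̂(ξ)| ≥ sqrt((1−c)/c) · q^{-1}. -/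
open Finset BigOperators Matrix

/-- The Fourier transform on the product space `F_q^2 ⊕ F_q^m`. -/
noncomputable def ft2 {F : Type*} [CommRing F] [Fintype F] {m : ℕ}
    (χ : AddChar F ℂ) (f : (Fin 2 → F) × (Fin m → F) → ℂ)
    (ξ : (Fin 2 → F) × (Fin m → F)) : ℂ :=
  ∑ p : (Fin 2 → F) × (Fin m → F), χ (-(ξ.1 ⬝ᵥ p.1 + ξ.2 ⬝ᵥ p.2)) * f p

lemma orth_aux {F : Type*} [Field F] [Fintype F] [DecidableEq F]
    (χ : AddChar F ℂ) (hχ : χ ≠ 1) (v : Fin 2 → F) :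
    ∑ ξ : Fin 2 → F, χ (ξ ⬝ᵥ v) =
      if v = 0 then ((Fintype.card F : ℂ)) ^ 2 else 0 := by
  have hprim := AddChar.IsPrimitive.of_ne_one hχ
  have h1 : ∑ ξ : Fin 2 → F, χ (ξ ⬝ᵥ v)
      = ∑ p : F × F, χ (p.1 * v 0) * χ (p.2 * v 1) := by
    rw [← (piFinTwoEquiv fun _ => F).symm.sum_comp]
    refine Finset.sum_congr rfl fun p _ => ?_
    simp [piFinTwoEquiv, dotProduct, Fin.sum_univ_two, AddChar.map_add_eq_mul]
  rw [h1, Fintype.sum_prod_type]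
  dsimp only
  rw [← Finset.sum_mul_sum, AddChar.sum_mulShift _ hprim, AddChar.sum_mulShift _ hprim]
  by_cases h0 : v = 0
  · simp [h0, sq]
  · have : v 0 ≠ 0 ∨ v 1 ≠ 0 := by
      by_contra hcon
      push_neg at hcon
      apply h0; funext i; fin_cases i <;> simp [hcon.1, hcon.2]
    rcases this with h | h <;> simp [h0, h]

/-- If `K₀ ⊆ F_q^2` is a Kakeya set with `|K₀| ≤ c q²`, `c ∈ (1/2,1)`, then
`K = K₀ × F_q^{d−2}` is a Kakeya set in `F_q^d` and every probability measure on `K`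
satisfies `sup_{ξ ≠ 0} |μ̂(ξ)| ≥ sqrt((1−c)/c) · q⁻¹`. -/
theorem stmt_17 {F : Type*} [Field F] [Fintype F] [DecidableEq F] {d q : ℕ}
    (hq : Fintype.card F = q) (χ : AddChar F ℂ) (hχ : χ ≠ 1) (hd : 2 ≤ d)
    (c : ℝ) (hc : c ∈ Set.Ioo (1 / 2 : ℝ) 1)
    (K₀ : Finset (Fin 2 → F))
    (hK₀ : ∀ x : Fin 2 → F, ∃ y : Fin 2 → F, ∀ a : F, y + a • x ∈ K₀)
    (hK₀c : (K₀.card : ℝ) ≤ c * (q : ℝ) ^ 2)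
    (K : Finset ((Fin 2 → F) × (Fin (d - 2) → F)))
    (hKdef : K = K₀ ×ˢ (univ : Finset (Fin (d - 2) → F))) :
    (∀ x : (Fin 2 → F) × (Fin (d - 2) → F),
      ∃ y : (Fin 2 → F) × (Fin (d - 2) → F), ∀ a : F, y + a • x ∈ K) ∧
    ∀ μ : (Fin 2 → F) × (Fin (d - 2) → F) → ℝ,
      (∀ p, 0 ≤ μ p) → (∑ p, μ p = 1) → (∀ p, μ p ≠ 0 → p ∈ K) →
      ∃ ξ : (Fin 2 → F) × (Fin (d - 2) → F), ξ ≠ 0 ∧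
        Real.sqrt ((1 - c) / c) * (q : ℝ)⁻¹ ≤ ‖ft2 χ (fun p => (μ p : ℂ)) ξ‖ := by
  obtain ⟨hc1, hc2⟩ := hc
  have hcpos : (0:ℝ) < c := lt_trans (by norm_num) hc1
  have hq2 : 2 ≤ q := hq ▸ Fintype.one_lt_card
  have hq0 : (0:ℝ) < q := by exact_mod_cast Nat.lt_of_lt_of_le Nat.zero_lt_two hq2
  constructor
  · rintro ⟨x1, x2⟩
    obtain ⟨y1, hy1⟩ := hK₀ x1
    refine ⟨(y1, 0), fun a => ?_⟩
    simpa [hKdef, Finset.mem_product] using hy1 a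
  · intro μ hμ0 hμ1 hμK
    set ν : (Fin 2 → F) → ℝ := fun x => ∑ y, μ (x, y) with hν
    set g : (Fin 2 → F) → ℂ := fun ξ => ∑ x, χ (-(ξ ⬝ᵥ x)) * (ν x : ℂ) with hg
    have hgf : ∀ ξ₁ : Fin 2 → F,
        ft2 χ (fun p => (μ p : ℂ)) (ξ₁, (0 : Fin (d-2) → F)) = g ξ₁ := by
      intro ξ₁
      rw [ft2, Fintype.sum_prod_type]
      simp only [zero_dotProduct, add_zero]
      refine Finset.sum_congr rfl fun x _ => ?_
      simp only [hν]
      push_cast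
      rw [← Finset.mul_sum]
    have key : ∑ ξ : Fin 2 → F, g ξ * (starRingEnd ℂ) (g ξ)
        = (q:ℂ)^2 * ∑ x, ((ν x : ℂ))^2 := by
      have expand : ∀ ξ : Fin 2 → F, g ξ * (starRingEnd ℂ) (g ξ)
          = ∑ x, ∑ x', ((ν x : ℂ) * (ν x')) * χ (ξ ⬝ᵥ (x' - x)) := by
        intro ξ
        rw [hg]
        dsimp only
        rw [map_sum, Finset.sum_mul_sum]
        refine Finset.sum_congr rfl fun x _ => Finset.sum_congr rfl fun x' _ => ?_
        rw [_root_.map_mul, Complex.conj_ofReal, ← AddChar.map_neg_eq_conj, neg_neg]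
        have hmul : χ (-(ξ ⬝ᵥ x)) * χ (ξ ⬝ᵥ x') = χ (ξ ⬝ᵥ (x' - x)) := by
          rw [← AddChar.map_add_eq_mul]
          congr 1
          rw [dotProduct_sub]
          ring
        rw [mul_mul_mul_comm, hmul]
        ring
      calc ∑ ξ : Fin 2 → F, g ξ * (starRingEnd ℂ) (g ξ)
          = ∑ ξ : Fin 2 → F, ∑ x, ∑ x', ((ν x : ℂ) * (ν x')) * χ (ξ ⬝ᵥ (x' - x)) :=
            Finset.sum_congr rfl fun ξ _ => expand ξ
        _ = ∑ x, ∑ x', ((ν x : ℂ) * (ν x')) * ∑ ξ : Fin 2 → F, χ (ξ ⬝ᵥ (x' - x)) := by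
            rw [Finset.sum_comm]
            refine Finset.sum_congr rfl fun x _ => ?_
            rw [Finset.sum_comm]
            refine Finset.sum_congr rfl fun x' _ => ?_
            rw [Finset.mul_sum]
        _ = ∑ x, ∑ x', ((ν x : ℂ) * (ν x')) * (if x' - x = 0 then ((q:ℂ))^2 else 0) := by
            refine Finset.sum_congr rfl fun x _ => Finset.sum_congr rfl fun x' _ => ?_
            rw [orth_aux χ hχ, hq]
        _ = (q:ℂ)^2 * ∑ x, ((ν x : ℂ))^2 := by
            simp only [sub_eq_zero, mul_ite, mul_zero, Finset.sum_ite_eq', Finset.mem_univ,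
              if_true]
            rw [Finset.mul_sum]
            refine Finset.sum_congr rfl fun x _ => by ring
    have hparsR : ∑ ξ : Fin 2 → F, ‖g ξ‖^2 = (q:ℝ)^2 * ∑ x, (ν x)^2 := by
      have hcast : ((∑ ξ : Fin 2 → F, ‖g ξ‖^2 : ℝ) : ℂ) = (((q:ℝ)^2 * ∑ x, (ν x)^2 : ℝ) : ℂ) := by
        push_cast
        rw [← key]
        refine Finset.sum_congr rfl fun ξ _ => ?_
        rw [Complex.mul_conj]
        norm_cast
        rw [← Complex.sq_norm]
      exact_mod_cast hcast
    have hν0 : ∀ x, 0 ≤ ν x := fun x => Finset.sum_nonneg fun y _ => hμ0 _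
    have hsupp : ∀ x ∉ K₀, ν x = 0 := by
      intro x hx
      refine Finset.sum_eq_zero fun y _ => ?_
      by_contra h
      have hm := hμK (x, y) h
      rw [hKdef, Finset.mem_product] at hm
      exact hx hm.1
    have htot : ∑ x, ν x = 1 := by
      simp only [hν]
      rw [← Fintype.sum_prod_type]
      exact hμ1
    have hK1 : ∑ x ∈ K₀, ν x = 1 := by
      rw [← htot]
      exact Finset.sum_subset (Finset.subset_univ _) (fun x _ hx => hsupp x hx)
    have hK₀ne : 0 < (K₀.card : ℝ) := by
      obtain ⟨y, hy⟩ := hK₀ 0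
      have hy0 := hy 0
      simp only [zero_smul, add_zero] at hy0
      exact_mod_cast Finset.card_pos.mpr ⟨y, hy0⟩
    have hSnn : 0 ≤ ∑ x, (ν x)^2 := Finset.sum_nonneg fun x _ => sq_nonneg _
    have hcs : 1 ≤ (K₀.card : ℝ) * ∑ x, (ν x)^2 := by
      have h1 := sq_sum_le_card_mul_sum_sq (s := K₀) (f := ν)
      rw [hK1] at h1
      have h2 : ∑ x ∈ K₀, (ν x)^2 ≤ ∑ x, (ν x)^2 :=
        Finset.sum_le_univ_sum_of_nonneg fun x => sq_nonneg _
      nlinarith [hK₀ne]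
    have hsum2 : 1 / (c * (q:ℝ)^2) ≤ ∑ x, (ν x)^2 := by
      rw [div_le_iff₀ (by positivity)]
      calc (1:ℝ) ≤ (K₀.card:ℝ) * ∑ x, (ν x)^2 := hcs
        _ ≤ c * (q:ℝ)^2 * ∑ x, (ν x)^2 := mul_le_mul_of_nonneg_right hK₀c hSnn
        _ = (∑ x, (ν x)^2) * (c * (q:ℝ)^2) := mul_comm _ _
    have hg0 : g 0 = 1 := by
      rw [hg]
      dsimp only
      simp only [zero_dotProduct, neg_zero, AddChar.map_zero_eq_one, one_mul]
      rw [← Complex.ofReal_sum, htot, Complex.ofReal_one]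
    have hsplit : ∑ ξ ∈ (univ \ {0} : Finset (Fin 2 → F)), ‖g ξ‖^2
        = (q:ℝ)^2 * ∑ x, (ν x)^2 - 1 := by
      have h := Finset.sum_eq_sum_sdiff_singleton_add (Finset.mem_univ (0 : Fin 2 → F))
        (fun ξ => ‖g ξ‖^2)
      rw [hparsR] at h
      rw [hg0] at h
      simp only [norm_one, one_pow] at h
      linarith
    have hlow : (1-c)/c ≤ ∑ ξ ∈ (univ \ {0} : Finset (Fin 2 → F)), ‖g ξ‖^2 := by
      rw [hsplit]
      have h5 : (q:ℝ)^2 * (1/(c*(q:ℝ)^2)) = 1/c := by field_simp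
      have h3 : (q:ℝ)^2 * (1/(c*(q:ℝ)^2)) ≤ (q:ℝ)^2 * ∑ x, (ν x)^2 :=
        mul_le_mul_of_nonneg_left hsum2 (by positivity)
      have h4 : (1-c)/c = 1/c - 1 := by field_simp
      linarith
    set B : ℝ := (1-c)/c * (((q:ℝ))^2)⁻¹ with hB
    have hdnn : 0 ≤ (1-c)/c := div_nonneg (by linarith) hcpos.le
    have hBnn : 0 ≤ B := mul_nonneg hdnn (by positivity)
    have hex : ∃ ξ₁ : Fin 2 → F, ξ₁ ≠ 0 ∧ B ≤ ‖g ξ₁‖^2 := by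
      by_contra hcon
      push_neg at hcon
      have hne : ((univ \ {0}) : Finset (Fin 2 → F)).Nonempty := by
        refine ⟨fun _ => 1, ?_⟩
        simp only [Finset.mem_sdiff, Finset.mem_univ, Finset.mem_singleton, true_and]
        intro h
        have h1 := congrFun h 0
        simp at h1
      have hlt : ∑ ξ ∈ (univ \ {0} : Finset (Fin 2 → F)), ‖g ξ‖^2
          < ∑ _ξ ∈ (univ \ {0} : Finset (Fin 2 → F)), B := by
        refine Finset.sum_lt_sum_of_nonempty hne fun ξ hξ => ?_
        rw [Finset.mem_sdiff, Finset.mem_singleton] at hξ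
        exact hcon ξ hξ.2
      rw [Finset.sum_const, nsmul_eq_mul] at hlt
      have hcard : (((univ \ {0} : Finset (Fin 2 → F)).card : ℝ)) ≤ (q:ℝ)^2 := by
        have h6 : (univ \ {0} : Finset (Fin 2 → F)).card ≤ Fintype.card (Fin 2 → F) := by
          rw [← Finset.card_univ]
          exact Finset.card_le_card (Finset.subset_univ _)
        have hcF : Fintype.card (Fin 2 → F) = q^2 := by
          rw [Fintype.card_fun, Fintype.card_fin, hq]
        rw [hcF] at h6
        exact_mod_cast h6
      have h7 : ((univ \ {0} : Finset (Fin 2 → F)).card : ℝ) * B ≤ (q:ℝ)^2 * B :=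
        mul_le_mul_of_nonneg_right hcard hBnn
      have h8 : (q:ℝ)^2 * B = (1-c)/c := by
        rw [hB]
        field_simp
      linarith
    obtain ⟨ξ₁, hξ1, hBle⟩ := hex
    refine ⟨(ξ₁, 0), fun h => hξ1 (congrArg Prod.fst h), ?_⟩
    rw [hgf ξ₁]
    have heq : Real.sqrt ((1-c)/c) * (q:ℝ)⁻¹ = Real.sqrt B := by
      rw [hB, Real.sqrt_mul hdnn, Real.sqrt_inv, Real.sqrt_sq hq0.le]
    rw [heq]
    calc Real.sqrt B ≤ Real.sqrt (‖g ξ₁‖^2) := Real.sqrt_le_sqrt hBle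
      _ = ‖g ξ₁‖ := Real.sqrt_sq (norm_nonneg _)
end
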